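/- (Proposition 8.) (i) For every rich incomplete AF there is a constrained incomplete AF whose set of completions equals the set of completions of the rIAF. (ii) Suppose a, b ∈ U are distinct and let φ₀ = aw_a ∧ aw_b ∧ (att_{a,b} ∨ att_{b,a}) ∧ ¬(att_{a,b} ∧ att_{b,a}) ∧ ¬att_{a,a} ∧ ¬att_{b,b}. Then the cIAF ({a,b}, φ₀) has exactly the two completions ({a,b}, {(a,b)}) and ({a,b}, {(b,a)}), and no rIAF has this set of completions. Consequently cIAFs are strictly more expressive than rIAFs; and since every IAF (A^F, R^F, A^?, R^?) is an rIAF with R^↔ = ∅ having the same completions, cIAFs are also strictly more expressive than IAFs. -/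

import Mathlib

noncomputable section

namespace DLPA

/-- Propositional variables: awareness, acceptance, attack, auxiliary acceptance
copies, plus countably many further auxiliary variables. -/
inductive PVar (U : Type) : Type
  | aw : U → PVar U
  | inn : U → PVar U
  | att : U → U → PVar U
  | inn' : U → PVar U
  | aux : Nat → PVar U

-- DL-PA formulas and programs, by mutual recursion.
mutual
  inductive Form (U : Type) : Type
    | var : PVar U → Form U
    | neg : Form U → Form U
    | conj : Form U → Form U → Form U
    | box : Prog U → Form U → Form U
  inductive Prog (U : Type) : Type
    | add : PVar U → Prog U           -- +p
    | rem : PVar U → Prog U           -- −p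
    | test : Form U → Prog U          -- φ?
    | seq : Prog U → Prog U → Prog U
    | choice : Prog U → Prog U → Prog U
    | conv : Prog U → Prog U
end

variable {U : Type}

/-- A valuation is a set of propositional variables. -/
abbrev Val (U : Type) := Set (PVar U)

-- Satisfaction of formulas and interpretation of programs, by mutual recursion.
mutual
  def Sat : Val U → Form U → Prop
    | v, Form.var p => p ∈ v
    | v, Form.neg φ => ¬ Sat v φ
    | v, Form.conj φ ψ => Sat v φ ∧ Sat v ψ
    | v, Form.box π φ => ∀ w, Rel π v w → Sat w φ
  def Rel : Prog U → Val U → Val U → Prop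
    | Prog.add p, v, w => w = v ∪ {p}
    | Prog.rem p, v, w => w = v \ {p}
    | Prog.test φ, v, w => w = v ∧ Sat v φ
    | Prog.seq π₁ π₂, v, w => ∃ u, Rel π₁ v u ∧ Rel π₂ u w
    | Prog.choice π₁ π₂, v, w => Rel π₁ v w ∨ Rel π₂ v w
    | Prog.conv π, v, w => Rel π w v
end

def Form.falsum : Form U := Form.conj (Form.var (PVar.aux 0)) (Form.neg (Form.var (PVar.aux 0)))
def Form.top : Form U := Form.neg Form.falsum
def Form.impl (φ ψ : Form U) : Form U := Form.neg (Form.conj φ (Form.neg ψ))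
def Form.disj (φ ψ : Form U) : Form U := Form.neg (Form.conj (Form.neg φ) (Form.neg ψ))
def Form.equiv (φ ψ : Form U) : Form U := Form.conj (Form.impl φ ψ) (Form.impl ψ φ)
def Form.dia (π : Prog U) (φ : Form U) : Form U := Form.neg (Form.box π (Form.neg φ))
def Prog.skip : Prog U := Prog.test Form.top

/-- Sequential composition of a list of programs (`skip` for the empty list). -/
def seqList {β : Type} (f : β → Prog U) : List β → Prog U
  | [] => Prog.skip
  | p :: ps => Prog.seq (f p) (seqList f ps)

/-- Nondeterministic composition of a list of programs (`skip` for the empty list). -/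
def unionList {β : Type} (f : β → Prog U) : List β → Prog U
  | [] => Prog.skip
  | [p] => f p
  | p :: ps => Prog.choice (f p) (unionList f ps)

def mkTrueOne (L : List (PVar U)) : Prog U :=
  unionList (fun p => Prog.seq (Prog.test (Form.neg (Form.var p))) (Prog.add p)) L
def mkFalseOne (L : List (PVar U)) : Prog U :=
  unionList (fun p => Prog.seq (Prog.test (Form.var p)) (Prog.rem p)) L
def mkTrueSome (L : List (PVar U)) : Prog U :=
  seqList (fun p => Prog.choice (Prog.add p) Prog.skip) L
def mkFalseSome (L : List (PVar U)) : Prog U :=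
  seqList (fun p => Prog.choice (Prog.rem p) Prog.skip) L
def vary (L : List (PVar U)) : Prog U :=
  seqList (fun p => Prog.choice (Prog.add p) (Prog.rem p)) L
/-- dis(ATT_R): for each pair (x,y) in the list, make true att_{x,y} or att_{y,x}. -/
def dis (L : List (U × U)) : Prog U :=
  seqList (fun q => Prog.choice (Prog.add (PVar.att q.1 q.2)) (Prog.add (PVar.att q.2 q.1))) L

def conjList : List (Form U) → Form U
  | [] => Form.top
  | φ :: φs => Form.conj φ (conjList φs)
def disjList : List (Form U) → Form U
  | [] => Form.falsum
  | φ :: φs => Form.disj φ (disjList φs)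

/-- The elements of a finite universe in a fixed order. -/
def enum (U : Type) [Fintype U] : List U := Finset.univ.toList

def bigConj [Fintype U] (f : U → Form U) : Form U := conjList ((enum U).map f)
def bigDisj [Fintype U] (f : U → Form U) : Form U := disjList ((enum U).map f)

def INlist (U : Type) [Fintype U] : List (PVar U) := (enum U).map PVar.inn

/-- copy(IN_U) copies the value of in_x to in'_x, for every x ∈ U. -/
def copyIN (U : Type) [Fintype U] : Prog U :=
  seqList (fun x => Prog.choice
      (Prog.seq (Prog.test (Form.var (PVar.inn x))) (Prog.add (PVar.inn' x)))
      (Prog.seq (Prog.test (Form.neg (Form.var (PVar.inn x)))) (Prog.rem (PVar.inn' x))))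
    (enum U)

def Well (U : Type) [Fintype U] : Form U :=
  bigConj (fun x => Form.impl (Form.var (PVar.inn x)) (Form.var (PVar.aw x)))

def ConFree (U : Type) [Fintype U] : Form U :=
  Form.conj (Well U) (bigConj fun x => bigConj fun y =>
    Form.neg (Form.conj (Form.var (PVar.inn x))
      (Form.conj (Form.var (PVar.inn y)) (Form.var (PVar.att x y)))))

def AdmissibleF (U : Type) [Fintype U] : Form U :=
  Form.conj (ConFree U) (bigConj fun x => Form.impl (Form.var (PVar.inn x))
    (bigConj fun y => Form.impl (Form.conj (Form.var (PVar.aw y)) (Form.var (PVar.att y x)))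
      (bigDisj fun z => Form.conj (Form.var (PVar.inn z)) (Form.var (PVar.att z y)))))

def StableF (U : Type) [Fintype U] : Form U :=
  Form.conj (Well U) (bigConj fun x => Form.impl (Form.var (PVar.aw x))
    (Form.equiv (Form.var (PVar.inn x))
      (Form.neg (bigDisj fun y => Form.conj (Form.var (PVar.inn y)) (Form.var (PVar.att y x))))))

def CompleteF (U : Type) [Fintype U] : Form U :=
  Form.conj (ConFree U) (bigConj fun x => Form.equiv (Form.var (PVar.inn x))
    (bigConj fun y => Form.impl (Form.conj (Form.var (PVar.aw y)) (Form.var (PVar.att y x)))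
      (bigDisj fun z => Form.conj (Form.var (PVar.inn z)) (Form.var (PVar.att z y)))))

def GroundedF (U : Type) [Fintype U] : Form U :=
  Form.conj (CompleteF U)
    (Form.box (Prog.seq (mkFalseOne (INlist U)) (mkFalseSome (INlist U))) (Form.neg (CompleteF U)))

def PreferredF (U : Type) [Fintype U] : Form U :=
  Form.conj (AdmissibleF U)
    (Form.box (Prog.seq (mkTrueOne (INlist U)) (mkTrueSome (INlist U))) (Form.neg (AdmissibleF U)))

def NaiveF (U : Type) [Fintype U] : Form U :=
  Form.conj (ConFree U) (Form.box (mkTrueOne (INlist U)) (Form.neg (ConFree U)))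

def IncludedInCp (U : Type) [Fintype U] : Form U :=
  bigConj fun x => Form.impl
    (Form.disj (Form.var (PVar.inn x)) (Form.conj (Form.var (PVar.aw x))
      (bigDisj fun y => Form.conj (Form.var (PVar.inn y)) (Form.var (PVar.att y x)))))
    (Form.disj (Form.var (PVar.inn' x)) (Form.conj (Form.var (PVar.aw x))
      (bigDisj fun y => Form.conj (Form.var (PVar.inn' y)) (Form.var (PVar.att y x)))))

def IncludesCp (U : Type) [Fintype U] : Form U :=
  bigConj fun x => Form.impl
    (Form.disj (Form.var (PVar.inn' x)) (Form.conj (Form.var (PVar.aw x))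
      (bigDisj fun y => Form.conj (Form.var (PVar.inn' y)) (Form.var (PVar.att y x)))))
    (Form.disj (Form.var (PVar.inn x)) (Form.conj (Form.var (PVar.aw x))
      (bigDisj fun y => Form.conj (Form.var (PVar.inn y)) (Form.var (PVar.att y x)))))

/-- makeExt^σ = vary(IN_U); φ_σ? -/
def makeExt (U : Type) [Fintype U] (φ : Form U) : Prog U :=
  Prog.seq (vary (INlist U)) (Prog.test φ)

def SemiStableF (U : Type) [Fintype U] : Form U :=
  Form.conj (CompleteF U)
    (Form.box (Prog.seq (copyIN U) (makeExt U (CompleteF U)))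
      (Form.impl (IncludesCp U) (IncludedInCp U)))

/-- A_v -/
def Av (v : Val U) : Set U := {x | PVar.aw x ∈ v}
/-- R_v -/
def Rv (v : Val U) : Set (U × U) := {q | q.1 ∈ Av v ∧ q.2 ∈ Av v ∧ PVar.att q.1 q.2 ∈ v}
/-- E(v) -/
def Ev (v : Val U) : Set U := {x | PVar.inn x ∈ v}
/-- {x ∈ U : in'_x ∈ v} -/
def Cv (v : Val U) : Set U := {x | PVar.inn' x ∈ v}
/-- v_(A,R) = AW_A ∪ ATT_R -/
def valOf (A : Set U) (R : Set (U × U)) : Val U :=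
  (PVar.aw '' A) ∪ ((fun q : U × U => PVar.att q.1 q.2) '' R)

/-- E⁺, the set of arguments of A attacked by E in (A,R). -/
def attacked (A : Set U) (R : Set (U × U)) (E : Set U) : Set U :=
  {x ∈ A | ∃ y ∈ E, (y, x) ∈ R}
/-- E⊕ = E ∪ E⁺, the range of E. -/
def rangeOf (A : Set U) (R : Set (U × U)) (E : Set U) : Set U :=
  E ∪ attacked A R E

def IsConflictFree (A : Set U) (R : Set (U × U)) (E : Set U) : Prop :=
  E ⊆ A ∧ E ∩ attacked A R E = ∅
def Defends (A : Set U) (R : Set (U × U)) (E : Set U) (a : U) : Prop :=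
  ∀ x ∈ A, (x, a) ∈ R → x ∈ attacked A R E
def IsAdmissibleExt (A : Set U) (R : Set (U × U)) (E : Set U) : Prop :=
  IsConflictFree A R E ∧ ∀ a ∈ E, Defends A R E a
def IsStableExt (A : Set U) (R : Set (U × U)) (E : Set U) : Prop :=
  IsConflictFree A R E ∧ A \ E ⊆ attacked A R E
def IsCompleteExt (A : Set U) (R : Set (U × U)) (E : Set U) : Prop :=
  IsConflictFree A R E ∧ E = {a ∈ A | Defends A R E a}
def IsGroundedExt (A : Set U) (R : Set (U × U)) (E : Set U) : Prop :=
  IsCompleteExt A R E ∧ ∀ E', IsCompleteExt A R E' → E' ⊆ E → E' = E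
def IsPreferredExt (A : Set U) (R : Set (U × U)) (E : Set U) : Prop :=
  IsCompleteExt A R E ∧ ∀ E', IsCompleteExt A R E' → E ⊆ E' → E' = E
def IsNaiveExt (A : Set U) (R : Set (U × U)) (E : Set U) : Prop :=
  IsConflictFree A R E ∧ ∀ E', IsConflictFree A R E' → E ⊆ E' → E' = E
def IsSemiStableExt (A : Set U) (R : Set (U × U)) (E : Set U) : Prop :=
  IsCompleteExt A R E ∧ ¬ ∃ E', IsCompleteExt A R E' ∧ rangeOf A R E ⊂ rangeOf A R E'

end DLPA

end

noncomputable section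
open DLPA

/-- The list of awareness variables of a finite set of arguments, in a fixed order. -/
def AWlist {U : Type} (A : Finset U) : List (PVar U) := A.toList.map PVar.aw
/-- The list of attack variables of a finite attack relation, in a fixed order. -/
def ATTlist {U : Type} (R : Finset (U × U)) : List (PVar U) :=
  R.toList.map (fun q => PVar.att q.1 q.2)

/-- The defining conditions of an incomplete AF (A^F, R^F, A^?, R^?). -/
def IAFConds {U : Type} (AF Aq : Set U) (RF Rq : Set (U × U)) : Prop :=
  Disjoint AF Aq ∧ Disjoint RF Rq ∧
    RF ⊆ (AF ∪ Aq) ×ˢ (AF ∪ Aq) ∧ Rq ⊆ (AF ∪ Aq) ×ˢ (AF ∪ Aq)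

/-- (A*, R*) is a completion of the IAF (A^F, R^F, A^?, R^?). -/
def IsCompletionOfIAF {U : Type} (AF Aq : Set U) (RF Rq : Set (U × U))
    (As : Set U) (Rs : Set (U × U)) : Prop :=
  AF ⊆ As ∧ As ⊆ AF ∪ Aq ∧
    RF ∩ As ×ˢ As ⊆ Rs ∧ Rs ⊆ (RF ∪ Rq) ∩ As ×ˢ As

end

noncomputable section
open DLPA

/-- The defining conditions of a rich incomplete AF (A^F, R^F, A^?, R^?, R^↔). -/
def RIAFConds {U : Type} (AF Aq : Set U) (RF Rq Rl : Set (U × U)) : Prop :=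
  Disjoint AF Aq ∧ Disjoint RF Rq ∧ Disjoint RF Rl ∧ Disjoint Rq Rl ∧
    RF ⊆ (AF ∪ Aq) ×ˢ (AF ∪ Aq) ∧ Rq ⊆ (AF ∪ Aq) ×ˢ (AF ∪ Aq) ∧
    Rl ⊆ (AF ∪ Aq) ×ˢ (AF ∪ Aq) ∧
    (∀ x y, (x, y) ∈ Rl → (y, x) ∈ Rl) ∧ (∀ x, (x, x) ∉ Rl)

/-- (A*, R*) is a completion of the rIAF (A^F, R^F, A^?, R^?, R^↔). -/
def IsCompletionOfRIAF {U : Type} (AF Aq : Set U) (RF Rq Rl : Set (U × U))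
    (As : Set U) (Rs : Set (U × U)) : Prop :=
  AF ⊆ As ∧ As ⊆ AF ∪ Aq ∧
    RF ∩ As ×ˢ As ⊆ Rs ∧ Rs ⊆ (RF ∪ Rq ∪ Rl) ∩ As ×ˢ As ∧
    ∀ x y, x ∈ As → y ∈ As → (x, y) ∈ Rl → ((x, y) ∈ Rs ∨ (y, x) ∈ Rs)

end

noncomputable section
open DLPA

/-- φ is a program-free (Boolean) formula using only variables from S. -/
def UsesOnly {U : Type} (S : Set (PVar U)) : Form U → Prop
  | Form.var p => p ∈ S
  | Form.neg φ => UsesOnly S φ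
  | Form.conj φ ψ => UsesOnly S φ ∧ UsesOnly S ψ
  | Form.box _ _ => False

/-- AW_A ∪ ATT_{A×A}, the vocabulary of a constrained incomplete AF with domain A. -/
def cVocab {U : Type} (A : Set U) : Set (PVar U) :=
  (PVar.aw '' A) ∪ ((fun q : U × U => PVar.att q.1 q.2) '' (A ×ˢ A))

/-- AW_A ∪ IN_A ∪ ATT_{A×A}. -/
def cVocabFull {U : Type} (A : Set U) : Set (PVar U) :=
  cVocab A ∪ (PVar.inn '' A)

/-- (A*, R*) belongs to completions(A, φ). -/
def IsCCompletion {U : Type} (A : Set U) (φ : Form U)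
    (As : Set U) (Rs : Set (U × U)) : Prop :=
  ∃ v : Val U, v ⊆ cVocabFull A ∧ Sat v φ ∧ Av v = As ∧ Rv v = Rs

end

noncomputable section
open DLPA

/-- φ₀ = aw_a ∧ aw_b ∧ (att_{a,b} ∨ att_{b,a}) ∧ ¬(att_{a,b} ∧ att_{b,a}) ∧ ¬att_{a,a} ∧ ¬att_{b,b}. -/
def phi0 {U : Type} (a b : U) : Form U :=
  Form.conj (Form.var (PVar.aw a)) (Form.conj (Form.var (PVar.aw b))
    (Form.conj (Form.disj (Form.var (PVar.att a b)) (Form.var (PVar.att b a)))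
      (Form.conj (Form.neg (Form.conj (Form.var (PVar.att a b)) (Form.var (PVar.att b a))))
        (Form.conj (Form.neg (Form.var (PVar.att a a))) (Form.neg (Form.var (PVar.att b b)))))))

end

noncomputable section CIAFHelpers
open DLPA

variable {U : Type}

/-- Conjunction over a nonempty list, with explicit head. -/
def conjL : Form U → List (Form U) → Form U
  | φ, [] => φ
  | φ, ψ :: l => Form.conj φ (conjL ψ l)

lemma sat_conjL (v : Val U) : ∀ (φ : Form U) (l : List (Form U)),
    Sat v (conjL φ l) ↔ Sat v φ ∧ ∀ ψ ∈ l, Sat v ψ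
  | φ, [] => by simp [conjL]
  | φ, ψ :: l => by
    simp only [conjL, Sat, sat_conjL v ψ l, List.mem_cons]
    constructor
    · rintro ⟨h1, h2, h3⟩
      refine ⟨h1, fun χ hχ => ?_⟩
      rcases hχ with rfl | hχ
      · exact h2
      · exact h3 χ hχ
    · rintro ⟨h1, h2⟩; exact ⟨h1, h2 ψ (Or.inl rfl), fun χ hχ => h2 χ (Or.inr hχ)⟩

lemma uses_conjL (S : Set (PVar U)) : ∀ (φ : Form U) (l : List (Form U)),
    UsesOnly S φ → (∀ ψ ∈ l, UsesOnly S ψ) → UsesOnly S (conjL φ l)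
  | φ, [], h, _ => h
  | φ, ψ :: l, h, hl => by
    refine ⟨h, uses_conjL S ψ l (hl ψ List.mem_cons_self) fun χ hχ =>
      hl χ (List.mem_cons_of_mem _ hχ)⟩

lemma sat_impl (v : Val U) (φ ψ : Form U) :
    Sat v (Form.impl φ ψ) ↔ (Sat v φ → Sat v ψ) := by simp [Form.impl, Sat]

lemma sat_disj (v : Val U) (φ ψ : Form U) :
    Sat v (Form.disj φ ψ) ↔ (Sat v φ ∨ Sat v ψ) := by simp [Form.disj, Sat]; tauto

/-- A trivially true formula in the vocabulary of any A containing a. -/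
def trivF (a : U) : Form U := Form.impl (Form.var (PVar.aw a)) (Form.var (PVar.aw a))

lemma sat_trivF (v : Val U) (a : U) : Sat v (trivF a) := by simp [trivF, sat_impl]

lemma aw_mem_cVocab {A : Set U} {x : U} (h : x ∈ A) : PVar.aw x ∈ cVocab A :=
  Or.inl ⟨x, h, rfl⟩

lemma att_mem_cVocab {A : Set U} {x y : U} (hx : x ∈ A) (hy : y ∈ A) :
    PVar.att x y ∈ cVocab A :=
  Or.inr ⟨(x, y), ⟨hx, hy⟩, rfl⟩

lemma uses_trivF {A : Set U} {a : U} (ha : a ∈ A) : UsesOnly (cVocab A) (trivF a) := by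
  exact ⟨aw_mem_cVocab ha, aw_mem_cVocab ha⟩

lemma aw_mem_cVocabFull {A : Set U} {x : U} (h : PVar.aw x ∈ cVocabFull A) : x ∈ A := by
  simp [cVocabFull, cVocab] at h
  exact h

lemma att_mem_cVocabFull {A : Set U} {x y : U} (h : PVar.att x y ∈ cVocabFull A) :
    x ∈ A ∧ y ∈ A := by
  simp [cVocabFull, cVocab] at h
  exact h

lemma aw_mem_valOf {A : Set U} {R : Set (U × U)} {x : U} :
    PVar.aw x ∈ valOf A R ↔ x ∈ A := by
  simp [valOf]

lemma att_mem_valOf {A : Set U} {R : Set (U × U)} {x y : U} :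
    PVar.att x y ∈ valOf A R ↔ (x, y) ∈ R := by
  constructor
  · rintro (⟨z, hz, e⟩ | ⟨⟨p, q⟩, hpq, e⟩)
    · cases e
    · obtain ⟨rfl, rfl⟩ : p = x ∧ q = y := by
        injection e with h1 h2; exact ⟨h1, h2⟩
      exact hpq
  · intro h; exact Or.inr ⟨(x, y), h, rfl⟩

lemma Av_valOf (A : Set U) (R : Set (U × U)) : Av (valOf A R) = A := by
  ext x; simp [Av, aw_mem_valOf]

lemma Rv_valOf {A : Set U} {R : Set (U × U)} (h : R ⊆ A ×ˢ A) :
    Rv (valOf A R) = R := by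
  ext ⟨x, y⟩
  simp only [Rv, Set.mem_setOf_eq, Av_valOf, att_mem_valOf]
  constructor
  · rintro ⟨-, -, h3⟩; exact h3
  · intro hR; exact ⟨(h hR).1, (h hR).2, hR⟩

lemma valOf_subset_cVocabFull {A' A : Set U} {R : Set (U × U)}
    (hA : A' ⊆ A) (hR : R ⊆ A ×ˢ A) : valOf A' R ⊆ cVocabFull A := by
  rintro p (⟨x, hx, rfl⟩ | ⟨⟨x, y⟩, hxy, rfl⟩)
  · exact Or.inl (aw_mem_cVocab (hA hx))
  · exact Or.inl (att_mem_cVocab (hR hxy).1 (hR hxy).2)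

open Classical in
/-- Formula constraining awareness of argument x. -/
def gForm (AF Aq : Set U) (a : U) (x : U) : Form U :=
  if x ∈ AF then Form.var (PVar.aw x)
  else if x ∈ Aq then trivF a
  else if x ∈ (AF ∪ Aq ∪ {a} : Set U) then Form.neg (Form.var (PVar.aw x))
  else trivF a

open Classical in
/-- Formula constraining the attack variable of a pair q. -/
def hForm (RF Rq Rl : Set (U × U)) (A : Set U) (a : U) (q : U × U) : Form U :=
  if q ∈ RF then
    Form.impl (Form.conj (Form.var (PVar.aw q.1)) (Form.var (PVar.aw q.2)))
      (Form.var (PVar.att q.1 q.2))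
  else if q ∈ Rl then
    Form.impl (Form.conj (Form.var (PVar.aw q.1)) (Form.var (PVar.aw q.2)))
      (Form.disj (Form.var (PVar.att q.1 q.2)) (Form.var (PVar.att q.2 q.1)))
  else if q ∈ Rq then trivF a
  else if q.1 ∈ A ∧ q.2 ∈ A then
    Form.neg (Form.conj (Form.var (PVar.aw q.1))
      (Form.conj (Form.var (PVar.aw q.2)) (Form.var (PVar.att q.1 q.2))))
  else trivF a

lemma riaf_to_ciaf [Fintype U] (a : U) (AF Aq : Set U) (RF Rq Rl : Set (U × U))
    (hc : RIAFConds AF Aq RF Rq Rl) :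
    ∃ (A : Set U) (φ : Form U), UsesOnly (cVocab A) φ ∧
      ∀ (As : Set U) (Rs : Set (U × U)),
        IsCCompletion A φ As Rs ↔ IsCompletionOfRIAF AF Aq RF Rq Rl As Rs := by
  classical
  obtain ⟨hdA, hdFq, hdFl, hdql, hRF, hRq, hRl, hsym, hirr⟩ := hc
  set A : Set U := AF ∪ Aq ∪ {a} with hAdef
  have haA : a ∈ A := Or.inr rfl
  have hAq_sub : AF ∪ Aq ⊆ A := Set.subset_union_left
  have hall : (RF ∪ Rq ∪ Rl) ⊆ A ×ˢ A := by
    rintro ⟨x, y⟩ ((h | h) | h)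
    · exact ⟨hAq_sub (hRF h).1, hAq_sub (hRF h).2⟩
    · exact ⟨hAq_sub (hRq h).1, hAq_sub (hRq h).2⟩
    · exact ⟨hAq_sub (hRl h).1, hAq_sub (hRl h).2⟩
  refine ⟨A, conjL (trivF a)
      (((Finset.univ : Finset U).toList.map (gForm AF Aq a)) ++
        ((Finset.univ : Finset (U × U)).toList.map (hForm RF Rq Rl A a))), ?_, ?_⟩
  · -- UsesOnly
    apply uses_conjL _ _ _ (uses_trivF haA)
    intro ψ hψ
    rw [List.mem_append] at hψ
    rcases hψ with hψ | hψ <;> rw [List.mem_map] at hψ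
    · obtain ⟨x, -, rfl⟩ := hψ
      unfold gForm
      split_ifs with h1 h2 h3
      · exact aw_mem_cVocab (hAq_sub (Or.inl h1))
      · exact uses_trivF haA
      · exact aw_mem_cVocab h3
      · exact uses_trivF haA
    · obtain ⟨⟨x, y⟩, -, rfl⟩ := hψ
      unfold hForm
      split_ifs with h1 h2 h3 h4
      · have hx := hall (Or.inl (Or.inl h1))
        exact ⟨⟨aw_mem_cVocab hx.1, aw_mem_cVocab hx.2⟩, att_mem_cVocab hx.1 hx.2⟩
      · have hx := hall (Or.inr h2)
        exact ⟨⟨aw_mem_cVocab hx.1, aw_mem_cVocab hx.2⟩,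
          att_mem_cVocab hx.1 hx.2, att_mem_cVocab hx.2 hx.1⟩
      · exact uses_trivF haA
      · exact ⟨aw_mem_cVocab h4.1, aw_mem_cVocab h4.2, att_mem_cVocab h4.1 h4.2⟩
      · exact uses_trivF haA
  · intro As Rs
    constructor
    · rintro ⟨v, hsub, hsat, rfl, rfl⟩
      rw [sat_conjL] at hsat
      have hg : ∀ x : U, Sat v (gForm AF Aq a x) := fun x =>
        hsat.2 _ (List.mem_append_left _ (List.mem_map_of_mem (f := gForm AF Aq a) (by simp)))
      have hh : ∀ q : U × U, Sat v (hForm RF Rq Rl A a q) := fun q =>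
        hsat.2 _ (List.mem_append_right _ (List.mem_map_of_mem (f := hForm RF Rq Rl A a) (by simp)))
      have hawA : ∀ x : U, PVar.aw x ∈ v → x ∈ A := fun x hx =>
        aw_mem_cVocabFull (hsub hx)
      refine ⟨?_, ?_, ?_, ?_, ?_⟩
      · -- AF ⊆ Av v
        intro x hx
        have := hg x
        rw [gForm, if_pos hx] at this
        exact this
      · -- Av v ⊆ AF ∪ Aq
        intro x hx
        by_contra hnot
        have hxA : x ∈ A := hawA x hx
        have hxF : x ∉ AF := fun h => hnot (Or.inl h)
        have hxq : x ∉ Aq := fun h => hnot (Or.inr h)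
        have := hg x
        rw [gForm, if_neg hxF, if_neg hxq, if_pos hxA] at this
        exact this hx
      · -- RF ∩ As ×ˢ As ⊆ Rv v
        rintro ⟨x, y⟩ ⟨h1, hx, hy⟩
        have := hh (x, y)
        rw [hForm, if_pos h1, sat_impl] at this
        exact ⟨hx, hy, this ⟨hx, hy⟩⟩
      · -- Rv v ⊆ (RF ∪ Rq ∪ Rl) ∩ As ×ˢ As
        rintro ⟨x, y⟩ ⟨hx, hy, hatt⟩
        refine ⟨?_, hx, hy⟩
        by_contra hnot
        have hxF : (x, y) ∉ RF := fun h => hnot (Or.inl (Or.inl h))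
        have hxq : (x, y) ∉ Rq := fun h => hnot (Or.inl (Or.inr h))
        have hxl : (x, y) ∉ Rl := fun h => hnot (Or.inr h)
        have := hh (x, y)
        rw [hForm, if_neg hxF, if_neg hxl, if_neg hxq,
          if_pos (⟨hawA x hx, hawA y hy⟩ : x ∈ A ∧ y ∈ A)] at this
        exact this ⟨hx, hy, hatt⟩
      · -- Rl condition
        intro x y hx hy hl
        have hFneg : (x, y) ∉ RF := fun h => hdFl.ne_of_mem h hl rfl
        have := hh (x, y)
        rw [hForm, if_neg hFneg, if_pos hl, sat_impl] at this
        rcases (sat_disj _ _ _).1 (this ⟨hx, hy⟩) with h | h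
        · exact Or.inl ⟨hx, hy, h⟩
        · exact Or.inr ⟨hy, hx, h⟩
    · rintro ⟨h1, h2, h3, h4, h5⟩
      have hRsA : Rs ⊆ As ×ˢ As := fun q hq => (h4 hq).2
      refine ⟨valOf As Rs, valOf_subset_cVocabFull (h2.trans hAq_sub)
        (hRsA.trans (Set.prod_mono (h2.trans hAq_sub) (h2.trans hAq_sub))), ?_,
        Av_valOf _ _, Rv_valOf hRsA⟩
      rw [sat_conjL]
      refine ⟨sat_trivF _ _, ?_⟩
      intro ψ hψ
      rw [List.mem_append] at hψ
      rcases hψ with hψ | hψ <;> rw [List.mem_map] at hψ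
      · obtain ⟨x, -, rfl⟩ := hψ
        unfold gForm
        split_ifs with hx1 hx2 hx3
        · exact aw_mem_valOf.2 (h1 hx1)
        · exact sat_trivF _ _
        · intro hmem
          rcases h2 (aw_mem_valOf.1 hmem) with h | h
          exacts [hx1 h, hx2 h]
        · exact sat_trivF _ _
      · obtain ⟨⟨x, y⟩, -, rfl⟩ := hψ
        unfold hForm
        split_ifs with hq1 hq2 hq3 hq4
        · rw [sat_impl]
          rintro ⟨hx, hy⟩
          exact att_mem_valOf.2 (h3 ⟨hq1, aw_mem_valOf.1 hx, aw_mem_valOf.1 hy⟩)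
        · rw [sat_impl]
          rintro ⟨hx, hy⟩
          rw [sat_disj]
          rcases h5 x y (aw_mem_valOf.1 hx) (aw_mem_valOf.1 hy) hq2 with h | h
          · exact Or.inl (att_mem_valOf.2 h)
          · exact Or.inr (att_mem_valOf.2 h)
        · exact sat_trivF _ _
        · rintro ⟨-, -, hmem⟩
          have := (h4 (att_mem_valOf.1 hmem)).1
          rcases this with (h | h) | h
          exacts [hq1 h, hq3 h, hq2 h]
        · exact sat_trivF _ _

end CIAFHelpers

noncomputable section CIAFHelpers2
open DLPA

lemma sat_phi0 {U : Type} (a b : U) (v : Val U) :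
    Sat v (phi0 a b) ↔
      PVar.aw a ∈ v ∧ PVar.aw b ∈ v ∧ (PVar.att a b ∈ v ∨ PVar.att b a ∈ v) ∧
        ¬(PVar.att a b ∈ v ∧ PVar.att b a ∈ v) ∧ PVar.att a a ∉ v ∧ PVar.att b b ∉ v := by
  constructor
  · intro h
    simp only [phi0, Sat, Form.disj] at h
    obtain ⟨h1, h2, h3, h4, h5, h6⟩ := h
    refine ⟨h1, h2, ?_, fun hx => h4 hx, h5, h6⟩
    by_contra hc
    push_neg at hc
    exact h3 ⟨hc.1, hc.2⟩
  · rintro ⟨h1, h2, h3, h4, h5, h6⟩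
    simp only [phi0, Sat, Form.disj]
    refine ⟨h1, h2, ?_, fun h => h4 ⟨h.1, h.2⟩, h5, h6⟩
    rintro ⟨hx, hy⟩
    rcases h3 with h | h
    exacts [hx h, hy h]

lemma phi0_completions {U : Type} (a b : U) (hab : a ≠ b) (As : Set U) (Rs : Set (U × U)) :
    IsCCompletion {a, b} (phi0 a b) As Rs ↔
      (As = {a, b} ∧ (Rs = {(a, b)} ∨ Rs = {(b, a)})) := by
  constructor
  · rintro ⟨v, hsub, hsat, rfl, rfl⟩
    obtain ⟨h1, h2, h3, h4, h5, h6⟩ := (sat_phi0 a b v).1 hsat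
    have hAv : Av v = {a, b} := by
      ext x
      constructor
      · intro hx; exact aw_mem_cVocabFull (hsub hx)
      · rintro (rfl | rfl)
        exacts [h1, h2]
    refine ⟨hAv, ?_⟩
    have hmem : ∀ x y : U, PVar.att x y ∈ v → (x ∈ ({a, b} : Set U) ∧ y ∈ ({a, b} : Set U)) :=
      fun x y hx => att_mem_cVocabFull (hsub hx)
    rcases h3 with hc | hc
    · left
      ext ⟨x, y⟩
      simp only [Rv, Set.mem_setOf_eq, hAv, Set.mem_singleton_iff, Prod.mk.injEq]
      constructor
      · rintro ⟨hx, hy, hatt⟩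
        obtain ⟨hx', hy'⟩ := hmem x y hatt
        rcases hx' with rfl | rfl <;> rcases hy' with rfl | rfl
        · exact absurd hatt h5
        · exact ⟨rfl, rfl⟩
        · exact absurd ⟨hc, hatt⟩ h4
        · exact absurd hatt h6
      · rintro ⟨rfl, rfl⟩
        exact ⟨Or.inl rfl, Or.inr rfl, hc⟩
    · right
      ext ⟨x, y⟩
      simp only [Rv, Set.mem_setOf_eq, hAv, Set.mem_singleton_iff, Prod.mk.injEq]
      constructor
      · rintro ⟨hx, hy, hatt⟩
        obtain ⟨hx', hy'⟩ := hmem x y hatt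
        rcases hx' with rfl | rfl <;> rcases hy' with rfl | rfl
        · exact absurd hatt h5
        · exact absurd ⟨hatt, hc⟩ h4
        · exact ⟨rfl, rfl⟩
        · exact absurd hatt h6
      · rintro ⟨rfl, rfl⟩
        exact ⟨Or.inr rfl, Or.inl rfl, hc⟩
  · rintro ⟨rfl, hR⟩
    have hsub2 : ∀ R : Set (U × U), R = {(a, b)} ∨ R = {(b, a)} → R ⊆ ({a, b} : Set U) ×ˢ ({a, b} : Set U) := by
      rintro R (rfl | rfl) <;> rintro ⟨x, y⟩ h <;>
        simp only [Set.mem_singleton_iff, Prod.mk.injEq] at h <;>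
        obtain ⟨rfl, rfl⟩ := h
      · exact ⟨Or.inl rfl, Or.inr rfl⟩
      · exact ⟨Or.inr rfl, Or.inl rfl⟩
    refine ⟨valOf {a, b} Rs, valOf_subset_cVocabFull (subset_refl _) (hsub2 Rs hR), ?_,
      Av_valOf _ _, Rv_valOf (hsub2 Rs hR)⟩
    rw [sat_phi0]
    rcases hR with rfl | rfl <;>
      simp [aw_mem_valOf, att_mem_valOf, Prod.ext_iff, hab, Ne.symm hab]

lemma no_riaf {U : Type} (a b : U) (hab : a ≠ b) :
    ¬ ∃ (AF Aq : Set U) (RF Rq Rl : Set (U × U)), RIAFConds AF Aq RF Rq Rl ∧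
        ∀ (As : Set U) (Rs : Set (U × U)),
          IsCompletionOfRIAF AF Aq RF Rq Rl As Rs ↔ IsCCompletion {a, b} (phi0 a b) As Rs := by
  rintro ⟨AF, Aq, RF, Rq, Rl, hc, hiff⟩
  have h1 : IsCompletionOfRIAF AF Aq RF Rq Rl {a, b} {(a, b)} :=
    (hiff _ _).2 ((phi0_completions a b hab _ _).2 ⟨rfl, Or.inl rfl⟩)
  have h2 : IsCompletionOfRIAF AF Aq RF Rq Rl {a, b} {(b, a)} :=
    (hiff _ _).2 ((phi0_completions a b hab _ _).2 ⟨rfl, Or.inr rfl⟩)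
  obtain ⟨c11, c12, c13, c14, c15⟩ := h1
  obtain ⟨-, -, c23, c24, c25⟩ := h2
  have h3 : IsCompletionOfRIAF AF Aq RF Rq Rl {a, b} {(a, b), (b, a)} := by
    refine ⟨c11, c12, ?_, ?_, ?_⟩
    · intro q hq
      have e1 := c13 hq
      have e2 := c23 hq
      rw [Set.mem_singleton_iff] at e1 e2
      rw [e1] at e2
      simp only [Prod.mk.injEq] at e2
      exact absurd e2.1 hab
    · rintro q hq
      rw [Set.mem_insert_iff, Set.mem_singleton_iff] at hq
      rcases hq with rfl | rfl
      · exact c14 rfl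
      · exact c24 rfl
    · intro x y hx hy hl
      rcases c15 x y hx hy hl with h | h
      · exact Or.inl (Or.inl h)
      · exact Or.inr (Or.inl h)
  have h4 := (phi0_completions a b hab _ _).1 ((hiff _ _).1 h3)
  rcases h4.2 with h | h
  · have : (b, a) ∈ ({(a, b)} : Set (U × U)) := h ▸ Or.inr rfl
    rw [Set.mem_singleton_iff, Prod.mk.injEq] at this
    exact hab this.1.symm
  · have : (a, b) ∈ ({(b, a)} : Set (U × U)) := h ▸ Or.inl rfl
    rw [Set.mem_singleton_iff, Prod.mk.injEq] at this
    exact hab this.1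

lemma iaf_to_riaf {U : Type} (AF Aq : Set U) (RF Rq : Set (U × U)) (h : IAFConds AF Aq RF Rq) :
    RIAFConds AF Aq RF Rq ∅ ∧
      ∀ (As : Set U) (Rs : Set (U × U)),
        IsCompletionOfIAF AF Aq RF Rq As Rs ↔ IsCompletionOfRIAF AF Aq RF Rq ∅ As Rs := by
  obtain ⟨h1, h2, h3, h4⟩ := h
  refine ⟨⟨h1, h2, by simp, by simp, h3, h4, by simp, fun x y h => h.elim, fun x h => h⟩, ?_⟩
  intro As Rs
  constructor
  · rintro ⟨c1, c2, c3, c4⟩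
    exact ⟨c1, c2, c3, by rwa [Set.union_empty], fun x y _ _ h => h.elim⟩
  · rintro ⟨c1, c2, c3, c4, -⟩
    exact ⟨c1, c2, c3, by rwa [Set.union_empty] at c4⟩

end CIAFHelpers2


open DLPA in
/-- Proposition 8: cIAFs are strictly more expressive than (r)IAFs. -/
theorem ciaf_strictly_more_expressive
    (U : Type) [Fintype U] [Nonempty U] (a b : U) (hab : a ≠ b) :
    -- (i) every rIAF has an equivalent cIAF
    (∀ (AF Aq : Set U) (RF Rq Rl : Set (U × U)), RIAFConds AF Aq RF Rq Rl →
      ∃ (A : Set U) (φ : Form U), UsesOnly (cVocab A) φ ∧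
        ∀ (As : Set U) (Rs : Set (U × U)),
          IsCCompletion A φ As Rs ↔ IsCompletionOfRIAF AF Aq RF Rq Rl As Rs) ∧
    -- (ii) the completions of ({a,b}, φ₀) are exactly ({a,b},{(a,b)}) and ({a,b},{(b,a)})
    (∀ (As : Set U) (Rs : Set (U × U)),
        IsCCompletion {a, b} (phi0 a b) As Rs ↔
          (As = {a, b} ∧ (Rs = {(a, b)} ∨ Rs = {(b, a)}))) ∧
    -- and no rIAF has this set of completions
    (¬ ∃ (AF Aq : Set U) (RF Rq Rl : Set (U × U)), RIAFConds AF Aq RF Rq Rl ∧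
        ∀ (As : Set U) (Rs : Set (U × U)),
          IsCompletionOfRIAF AF Aq RF Rq Rl As Rs ↔ IsCCompletion {a, b} (phi0 a b) As Rs) ∧
    -- every IAF is an rIAF with R^↔ = ∅ having the same completions
    (∀ (AF Aq : Set U) (RF Rq : Set (U × U)), IAFConds AF Aq RF Rq →
      RIAFConds AF Aq RF Rq ∅ ∧
      ∀ (As : Set U) (Rs : Set (U × U)),
        IsCompletionOfIAF AF Aq RF Rq As Rs ↔ IsCompletionOfRIAF AF Aq RF Rq ∅ As Rs) ∧
    -- hence no IAF has the set of completions of ({a,b}, φ₀) either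
    (¬ ∃ (AF Aq : Set U) (RF Rq : Set (U × U)), IAFConds AF Aq RF Rq ∧
        ∀ (As : Set U) (Rs : Set (U × U)),
          IsCompletionOfIAF AF Aq RF Rq As Rs ↔ IsCCompletion {a, b} (phi0 a b) As Rs) := by
  refine ⟨fun AF Aq RF Rq Rl hc => riaf_to_ciaf a AF Aq RF Rq Rl hc,
    phi0_completions a b hab, no_riaf a b hab, iaf_to_riaf, ?_⟩
  rintro ⟨AF, Aq, RF, Rq, hc, hiff⟩
  exact no_riaf a b hab ⟨AF, Aq, RF, Rq, ∅, (iaf_to_riaf AF Aq RF Rq hc).1,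
    fun As Rs => ((iaf_to_riaf AF Aq RF Rq hc).2 As Rs).symm.trans (hiff As Rs)⟩
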